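/- arXiv:2410.17104 — 2 statements merged into one kernel-verified Lean document; each statement's English description precedes it below -/
import Mathlib

section
/- Let ι be a countable index set, λ : ι → ℝ with λ i ≥ 1 for all i and {i : λ i ≤ T} finite for every T, w : ι → ℝ with w i ≥ 0 for all i, and q ∈ ℕ. If limsup_{T→∞} (1/T)·log(∑_{i : λ i ≤ T} (λ i)^q · w i) = β for some real β with 0 < β < ∞, then limsup_{T→∞} (1/T)·log(∑_{i : T < λ i ≤ T+1} w i) = β. -/
open Filter

/-- Extended-real logarithm: `log 0` (and of anything nonpositive) is `-∞`. -/
noncomputable def elog (x : ℝ) : EReal := if x ≤ 0 then ⊥ else ((Real.log x : ℝ) : EReal)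

/-- The window `{i | T < λ i ≤ T + 1}` is finite, given that all cumulative sets
`{i | λ i ≤ T}` are finite. -/
theorem windowFinite {ι : Type*} (l : ι → ℝ) (hfin : ∀ T : ℝ, {i | l i ≤ T}.Finite)
    (T : ℝ) : {i | T < l i ∧ l i ≤ T + 1}.Finite :=
  (hfin (T + 1)).subset (fun _ hi => hi.2)

lemma elog_le_coe_iff {x y : ℝ} : elog x ≤ (y : EReal) ↔ x ≤ Real.exp y := by
  unfold elog
  split_ifs with h
  · simp only [bot_le, true_iff]
    exact h.trans (Real.exp_pos y).le
  · push_neg at h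
    rw [EReal.coe_le_coe_iff, Real.log_le_iff_le_exp h]

lemma coe_le_elog_iff {x y : ℝ} : (y : EReal) ≤ elog x ↔ Real.exp y ≤ x := by
  unfold elog
  split_ifs with h
  · simp only [le_bot_iff, EReal.coe_ne_bot, false_iff, not_le]
    exact lt_of_le_of_lt h (Real.exp_pos y)
  · push_neg at h
    rw [EReal.coe_le_coe_iff, Real.le_log_iff_exp_le h]

lemma coe_lt_elog_iff {x y : ℝ} : (y : EReal) < elog x ↔ Real.exp y < x := by
  rw [← not_le, ← not_le, elog_le_coe_iff]

lemma inv_mul_le_coe_iff {T c : ℝ} (hT : 0 < T) {x : EReal} :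
    ((1 / T : ℝ) : EReal) * x ≤ (c : EReal) ↔ x ≤ ((c * T : ℝ) : EReal) := by
  have hTne : (T : EReal) ≠ ⊤ := by simp
  have hTpos : (0 : EReal) < (T : EReal) := by exact_mod_cast hT
  have h : ((1 / T : ℝ) : EReal) * x = x / (T : EReal) := by
    rw [one_div, EReal.coe_inv, mul_comm]; rfl
  rw [h, EReal.div_le_iff_le_mul hTpos hTne, ← EReal.coe_mul, mul_comm]

lemma coe_le_inv_mul_iff {T c : ℝ} (hT : 0 < T) {x : EReal} :
    (c : EReal) ≤ ((1 / T : ℝ) : EReal) * x ↔ ((c * T : ℝ) : EReal) ≤ x := by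
  have hTne : (T : EReal) ≠ ⊤ := by simp
  have hTpos : (0 : EReal) < (T : EReal) := by exact_mod_cast hT
  have h : ((1 / T : ℝ) : EReal) * x = x / (T : EReal) := by
    rw [one_div, EReal.coe_inv, mul_comm]; rfl
  rw [h, EReal.le_div_iff_mul_le hTpos hTne, ← EReal.coe_mul]

lemma coe_lt_inv_mul_iff {T c : ℝ} (hT : 0 < T) {x : EReal} :
    (c : EReal) < ((1 / T : ℝ) : EReal) * x ↔ ((c * T : ℝ) : EReal) < x := by
  rw [← not_le, ← not_le, inv_mul_le_coe_iff hT]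

/-- Logarithmic terms are eventually dominated by any positive multiple of `T`. -/
lemma log_poly_small (q : ℕ) {ε : ℝ} (hε : 0 < ε) :
    ∀ᶠ T : ℝ in atTop, (q : ℝ) * Real.log T + Real.log (T + 1) ≤ ε * T := by
  have h1 : (fun T : ℝ => (q : ℝ) * Real.log T) =o[atTop] (fun T : ℝ => T) :=
    Real.isLittleO_log_id_atTop.const_mul_left _
  have h2 : (fun T : ℝ => Real.log (T + 1)) =o[atTop] (fun T : ℝ => T) := by
    have h3 := Real.isLittleO_log_id_atTop.comp_tendsto
      (tendsto_atTop_add_const_right atTop (1 : ℝ) tendsto_id)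
    have h4 : (fun T : ℝ => T + 1) =O[atTop] (fun T : ℝ => T) := by
      apply Asymptotics.IsBigO.of_bound 2
      filter_upwards [eventually_ge_atTop (1 : ℝ)] with T hT
      rw [Real.norm_eq_abs, Real.norm_eq_abs, abs_of_pos (by linarith), abs_of_pos (by linarith)]
      linarith
    exact h3.trans_isBigO h4
  have h5 := (h1.add h2).def hε
  filter_upwards [h5, eventually_ge_atTop (1 : ℝ)] with T h hT
  calc (q : ℝ) * Real.log T + Real.log (T + 1)
      ≤ ‖(q : ℝ) * Real.log T + Real.log (T + 1)‖ := le_abs_self _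
    _ ≤ ε * ‖T‖ := h
    _ = ε * T := by rw [Real.norm_eq_abs, abs_of_pos (by linarith)]

/-- Abstract form of the growth-rate transfer. -/
theorem main_abstract (S W : ℝ → ℝ) (q : ℕ)
    (hWS : ∀ T : ℝ, W T ≤ S (T + 1))
    (hSmono : ∀ ⦃T T' : ℝ⦄, T ≤ T' → S T ≤ S T')
    (hcover : ∀ T : ℝ, 1 ≤ T → S T ≤ T ^ q * ∑ n ∈ Finset.range ⌈T⌉₊, W n)
    (β : ℝ) (hβ : 0 < β)
    (hlim : limsup (fun T : ℝ => ((1 / T : ℝ) : EReal) * elog (S T)) atTop = (β : EReal)) :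
    limsup (fun T : ℝ => ((1 / T : ℝ) : EReal) * elog (W T)) atTop = (β : EReal) := by
  have upper : limsup (fun T : ℝ => ((1 / T : ℝ) : EReal) * elog (W T)) atTop ≤ (β : EReal) := by
    by_contra hcon
    push_neg at hcon
    obtain ⟨c, hc1, hc2⟩ := EReal.exists_between_coe_real hcon
    have hβc : β < c := by exact_mod_cast hc1
    set b := (β + c) / 2 with hbdef
    have hb1 : β < b := by rw [hbdef]; linarith
    have hb2 : b < c := by rw [hbdef]; linarith
    have hlt : limsup (fun T : ℝ => ((1 / T : ℝ) : EReal) * elog (S T)) atTop < (b : EReal) := by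
      rw [hlim]; exact_mod_cast hb1
    have hev := eventually_lt_of_limsup_lt hlt
    have hev1 : ∀ᶠ T : ℝ in atTop, S T ≤ Real.exp (b * T) := by
      filter_upwards [hev, eventually_ge_atTop (1 : ℝ)] with T h hT
      have hT0 : 0 < T := zero_lt_one.trans_le hT
      have := h.le
      rw [inv_mul_le_coe_iff hT0, elog_le_coe_iff] at this
      exact this
    have hev2 : ∀ᶠ T : ℝ in atTop, S (T + 1) ≤ Real.exp (b * (T + 1)) :=
      (tendsto_atTop_add_const_right atTop (1 : ℝ) tendsto_id).eventually hev1
    have hev3 : ∀ᶠ T : ℝ in atTop, ((1 / T : ℝ) : EReal) * elog (W T) ≤ (c : EReal) := by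
      filter_upwards [hev2, eventually_ge_atTop (max 1 (b / (c - b)))] with T h hT
      have hT1 : 1 ≤ T := le_trans (le_max_left _ _) hT
      have hT0 : 0 < T := zero_lt_one.trans_le hT1
      rw [inv_mul_le_coe_iff hT0, elog_le_coe_iff]
      refine le_trans (hWS T) (le_trans h (Real.exp_le_exp.mpr ?_))
      have hd : b / (c - b) ≤ T := le_trans (le_max_right _ _) hT
      have hcb : 0 < c - b := by linarith
      rw [div_le_iff₀ hcb] at hd
      calc b * (T + 1) = b * T + b := by ring
        _ ≤ b * T + T * (c - b) := by linarith
        _ = c * T := by ring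
    have hle : limsup (fun T : ℝ => ((1 / T : ℝ) : EReal) * elog (W T)) atTop ≤ (c : EReal) :=
      limsup_le_of_le (h := hev3)
    exact absurd hc2 (not_lt.mpr hle)
  have lower : (β : EReal) ≤ limsup (fun T : ℝ => ((1 / T : ℝ) : EReal) * elog (W T)) atTop := by
    by_contra hcon
    push_neg at hcon
    obtain ⟨c0, hc01, hc02⟩ := EReal.exists_between_coe_real hcon
    set c := max c0 (β / 2) with hcdef
    have hc0 : 0 < c := lt_of_lt_of_le (half_pos hβ) (le_max_right _ _)
    have hcβ : c < β := max_lt (by exact_mod_cast hc02) (by linarith)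
    have hlim_lt : limsup (fun T : ℝ => ((1 / T : ℝ) : EReal) * elog (W T)) atTop < (c : EReal) :=
      lt_of_lt_of_le hc01 (by exact_mod_cast le_max_left c0 (β / 2))
    have hfreq : (c : EReal) ≤ limsup (fun T : ℝ => ((1 / T : ℝ) : EReal) * elog (W T)) atTop := by
      refine le_limsup_of_frequently_le ?_ (by isBoundedDefault)
      rw [frequently_atTop]
      intro a
      set b := (c + β) / 2 with hbdef
      have hb1 : c < b := by rw [hbdef]; linarith
      have hb2 : b < β := by rw [hbdef]; linarith
      have hb0 : 0 < b := hc0.trans hb1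
      have hfr : ∃ᶠ T : ℝ in atTop,
          (b : EReal) < ((1 / T : ℝ) : EReal) * elog (S T) := by
        refine frequently_lt_of_lt_limsup (by isBoundedDefault) ?_
        rw [hlim]; exact_mod_cast hb2
      set M := max a 1 with hMdef
      set C := max (S (M + 1)) 1 with hCdef
      have hC1 : (1 : ℝ) ≤ C := le_max_right _ _
      have hC0 : 0 < C := zero_lt_one.trans_le hC1
      have hE2 : ∀ᶠ T : ℝ in atTop,
          (q : ℝ) * Real.log T + Real.log (T + 1) ≤ (b - c) * T :=
        log_poly_small q (by linarith)
      have hE4 : ∀ᶠ T : ℝ in atTop, Real.log C < c * T := by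
        filter_upwards [eventually_gt_atTop (Real.log C / c)] with T h
        rw [div_lt_iff₀ hc0] at h
        linarith [h]
      obtain ⟨T, hbT, hE2T, hE4T, hT1⟩ :=
        (hfr.and_eventually (hE2.and (hE4.and (eventually_ge_atTop (1 : ℝ))))).exists
      have hT0 : 0 < T := zero_lt_one.trans_le hT1
      set D := T ^ q * (T + 1) with hDdef
      have hTq : 0 < T ^ q := pow_pos hT0 q
      have hDpos : 0 < D := mul_pos hTq (by linarith)
      have hlogD : Real.log D = (q : ℝ) * Real.log T + Real.log (T + 1) := by
        rw [hDdef, Real.log_mul hTq.ne' (by linarith), Real.log_pow]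
      have hSgt : Real.exp (b * T) < S T := by
        rw [coe_lt_inv_mul_iff hT0, coe_lt_elog_iff] at hbT
        exact hbT
      have hcov := hcover T hT1
      set N := ⌈T⌉₊ with hNdef
      have hN1 : 1 ≤ N := Nat.one_le_ceil_iff.mpr hT0
      have hNpos : (0 : ℝ) < (N : ℝ) := by exact_mod_cast hN1
      have hNle : (N : ℝ) ≤ T + 1 := (Nat.ceil_lt_add_one hT0.le).le
      have hsum : Real.exp (b * T) / T ^ q ≤ ∑ n ∈ Finset.range N, W n := by
        rw [div_le_iff₀ hTq]
        calc Real.exp (b * T) ≤ S T := hSgt.le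
          _ ≤ T ^ q * ∑ n ∈ Finset.range N, W n := hcov
          _ = (∑ n ∈ Finset.range N, W n) * T ^ q := mul_comm _ _
      have hsum' : ∑ _n ∈ Finset.range N, Real.exp (b * T) / (T ^ q * N)
          ≤ ∑ n ∈ Finset.range N, W n := by
        rw [Finset.sum_const, Finset.card_range, nsmul_eq_mul]
        have heq : (N : ℝ) * (Real.exp (b * T) / (T ^ q * N)) = Real.exp (b * T) / T ^ q := by
          field_simp
        rw [heq]
        exact hsum
      obtain ⟨n, hnmem, hn⟩ := Finset.exists_le_of_sum_le
        ⟨0, Finset.mem_range.mpr (by omega)⟩ hsum'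
      have hnT : (n : ℝ) < T := Nat.lt_ceil.mp (Finset.mem_range.mp hnmem)
      have hWn : Real.exp (b * T) / D ≤ W n := by
        refine le_trans ?_ hn
        apply div_le_div_of_nonneg_left (Real.exp_pos _).le (mul_pos hTq hNpos)
        rw [hDdef]
        exact mul_le_mul_of_nonneg_left hNle hTq.le
      have hkey : Real.exp (c * n) ≤ W n := by
        refine le_trans ?_ hWn
        rw [le_div_iff₀ hDpos]
        calc Real.exp (c * n) * D = Real.exp (c * n + Real.log D) := by
              rw [Real.exp_add, Real.exp_log hDpos]
          _ ≤ Real.exp (b * T) := by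
              apply Real.exp_le_exp.mpr
              rw [hlogD]
              have h1 : c * n ≤ c * T := by nlinarith [hnT.le]
              linarith [hE2T]
      have hCn : C < W n := by
        refine lt_of_lt_of_le ?_ hWn
        rw [lt_div_iff₀ hDpos]
        calc C * D = Real.exp (Real.log C + Real.log D) := by
              rw [Real.exp_add, Real.exp_log hC0, Real.exp_log hDpos]
          _ < Real.exp (b * T) := by
              apply Real.exp_lt_exp.mpr
              rw [hlogD]
              linarith [hE2T, hE4T]
      have hnM : M < (n : ℝ) := by
        by_contra h
        push_neg at h
        have h1 : W n ≤ S (M + 1) := le_trans (hWS n) (hSmono (by linarith))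
        have h2 : W n ≤ C := h1.trans (le_max_left _ _)
        linarith
      have hna : a ≤ (n : ℝ) := le_trans (le_max_left a 1) hnM.le
      have hn0 : (0 : ℝ) < (n : ℝ) :=
        lt_trans zero_lt_one (lt_of_le_of_lt (le_max_right a 1) hnM)
      refine ⟨(n : ℝ), hna, ?_⟩
      rw [coe_le_inv_mul_iff hn0, coe_le_elog_iff]
      exact hkey
    exact absurd hlim_lt (not_lt.mpr hfreq)
  exact le_antisymm upper lower

section
variable {ι : Type*} (l : ι → ℝ) (w : ι → ℝ) (q : ℕ)
  (hfin : ∀ T : ℝ, {i | l i ≤ T}.Finite)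

lemma S_nonneg (hl : ∀ i, 1 ≤ l i) (hw : ∀ i, 0 ≤ w i) (T : ℝ) :
    0 ≤ ∑ i ∈ (hfin T).toFinset, (l i) ^ q * w i :=
  Finset.sum_nonneg fun i _ => mul_nonneg (pow_nonneg ((zero_le_one).trans (hl i)) q) (hw i)

lemma W_nonneg (hw : ∀ i, 0 ≤ w i) (T : ℝ) :
    0 ≤ ∑ i ∈ (windowFinite l hfin T).toFinset, w i :=
  Finset.sum_nonneg fun i _ => hw i

lemma S_mono (hl : ∀ i, 1 ≤ l i) (hw : ∀ i, 0 ≤ w i) {T T' : ℝ} (h : T ≤ T') :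
    ∑ i ∈ (hfin T).toFinset, (l i) ^ q * w i ≤ ∑ i ∈ (hfin T').toFinset, (l i) ^ q * w i := by
  apply Finset.sum_le_sum_of_subset_of_nonneg
  · intro i hi
    simp only [Set.Finite.mem_toFinset, Set.mem_setOf_eq] at *
    exact hi.trans h
  · intro i _ _
    exact mul_nonneg (pow_nonneg ((zero_le_one).trans (hl i)) q) (hw i)

lemma W_le_S (hl : ∀ i, 1 ≤ l i) (hw : ∀ i, 0 ≤ w i) (T : ℝ) :
    ∑ i ∈ (windowFinite l hfin T).toFinset, w i
      ≤ ∑ i ∈ (hfin (T + 1)).toFinset, (l i) ^ q * w i := by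
  calc ∑ i ∈ (windowFinite l hfin T).toFinset, w i
      ≤ ∑ i ∈ (windowFinite l hfin T).toFinset, (l i) ^ q * w i := by
        apply Finset.sum_le_sum
        intro i _
        exact le_mul_of_one_le_left (hw i) (one_le_pow₀ (hl i))
    _ ≤ ∑ i ∈ (hfin (T + 1)).toFinset, (l i) ^ q * w i := by
        apply Finset.sum_le_sum_of_subset_of_nonneg
        · intro i hi
          simp only [Set.Finite.mem_toFinset, Set.mem_setOf_eq] at *
          exact hi.2
        · intro i _ _
          exact mul_nonneg (pow_nonneg ((zero_le_one).trans (hl i)) q) (hw i)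

lemma S_cover (hl : ∀ i, 1 ≤ l i) (hw : ∀ i, 0 ≤ w i) {T : ℝ} (hT : 1 ≤ T) :
    ∑ i ∈ (hfin T).toFinset, (l i) ^ q * w i
      ≤ T ^ q * ∑ n ∈ Finset.range ⌈T⌉₊,
          ∑ i ∈ (windowFinite l hfin (n : ℝ)).toFinset, w i := by
  classical
  have hdisj : ∀ n ∈ Finset.range ⌈T⌉₊, ∀ m ∈ Finset.range ⌈T⌉₊, n ≠ m →
      Disjoint ((windowFinite l hfin (n : ℝ)).toFinset)
        ((windowFinite l hfin (m : ℝ)).toFinset) := by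
    intro n _ m _ hnm
    rw [Finset.disjoint_left]
    intro i hi hi'
    simp only [Set.Finite.mem_toFinset, Set.mem_setOf_eq] at hi hi'
    rcases lt_or_gt_of_ne hnm with h | h
    · have : (n : ℝ) + 1 ≤ (m : ℝ) := by exact_mod_cast h
      linarith [hi.2, hi'.1]
    · have : (m : ℝ) + 1 ≤ (n : ℝ) := by exact_mod_cast h
      linarith [hi'.2, hi.1]
  calc ∑ i ∈ (hfin T).toFinset, (l i) ^ q * w i
      ≤ ∑ i ∈ (hfin T).toFinset, T ^ q * w i := by
        apply Finset.sum_le_sum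
        intro i hi
        simp only [Set.Finite.mem_toFinset, Set.mem_setOf_eq] at hi
        exact mul_le_mul_of_nonneg_right
          (pow_le_pow_left₀ ((zero_le_one).trans (hl i)) hi q) (hw i)
    _ = T ^ q * ∑ i ∈ (hfin T).toFinset, w i := by rw [Finset.mul_sum]
    _ ≤ T ^ q * ∑ n ∈ Finset.range ⌈T⌉₊,
          ∑ i ∈ (windowFinite l hfin (n : ℝ)).toFinset, w i := by
        apply mul_le_mul_of_nonneg_left _ (pow_nonneg (zero_le_one.trans hT) q)
        rw [← Finset.sum_biUnion hdisj]
        apply Finset.sum_le_sum_of_subset_of_nonneg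
        · intro i hi
          simp only [Set.Finite.mem_toFinset, Set.mem_setOf_eq] at hi
          have h1 : 1 ≤ ⌈l i⌉₊ := by
            rw [Nat.one_le_ceil_iff]
            exact lt_of_lt_of_le zero_lt_one (hl i)
          rw [Finset.mem_biUnion]
          refine ⟨⌈l i⌉₊ - 1, ?_, ?_⟩
          · rw [Finset.mem_range]
            have : ⌈l i⌉₊ ≤ ⌈T⌉₊ := Nat.ceil_le_ceil hi
            omega
          · simp only [Set.Finite.mem_toFinset, Set.mem_setOf_eq]
            constructor
            · exact Nat.lt_ceil.mp (by omega)
            · have : ((⌈l i⌉₊ - 1 : ℕ) : ℝ) + 1 = (⌈l i⌉₊ : ℝ) := by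
                push_cast [h1]; ring
              rw [this]
              exact Nat.le_ceil _
        · exact fun i _ _ => hw i

end

/-- If the cumulative sums `∑_{λ i ≤ T} (λ i)^q · w i` have exponential growth rate
`β ∈ (0, ∞)`, then the window sums `∑_{T < λ i ≤ T+1} w i` have the same exponential
growth rate `β`. -/
theorem abstract_growth_rate {ι : Type*} [Countable ι] (l : ι → ℝ) (w : ι → ℝ) (q : ℕ)
    (hl : ∀ i, 1 ≤ l i) (hfin : ∀ T : ℝ, {i | l i ≤ T}.Finite)
    (hw : ∀ i, 0 ≤ w i) (β : ℝ) (hβ : 0 < β)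
    (hlim : limsup (fun T : ℝ =>
        ((1 / T : ℝ) : EReal) * elog (∑ i ∈ (hfin T).toFinset, (l i) ^ q * w i)) atTop
        = (β : EReal)) :
    limsup (fun T : ℝ =>
        ((1 / T : ℝ) : EReal) * elog (∑ i ∈ (windowFinite l hfin T).toFinset, w i)) atTop
      = (β : EReal) := by
  exact main_abstract (fun T => ∑ i ∈ (hfin T).toFinset, (l i) ^ q * w i)
    (fun T => ∑ i ∈ (windowFinite l hfin T).toFinset, w i) q
    (fun T => W_le_S l w q hfin hl hw T)
    (fun T T' h => S_mono l w q hfin hl hw h)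
    (fun T hT => S_cover l w q hfin hl hw hT) β hβ hlim
end

section
/- Let ι be a countable index set, λ : ι → ℝ with λ i ≥ 0 for all i and {i : λ i ≤ T} finite for every T, w : ι → ℝ with w i ≥ 0 for all i, and c ∈ ℝ. Then, as elements of the extended reals, limsup_{T→∞} (1/T)·log(∑_{i : T < λ i ≤ T+1} e^{c·λ i} · w i) = c + limsup_{T→∞} (1/T)·log(∑_{i : T < λ i ≤ T+1} w i); that is, tilting the weights by the exponential factor e^{c·λ i} shifts the exponential growth rate of the window sums by exactly c. -/
open Filter

lemma elog_mono {x y : ℝ} (h : x ≤ y) : elog x ≤ elog y := by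
  unfold elog
  split_ifs with h1 h2 h3
  · exact le_rfl
  · exact bot_le
  · exact absurd (h.trans h3) h1
  · exact_mod_cast Real.log_le_log (lt_of_not_ge h1) h

lemma elog_exp_mul (a y : ℝ) : elog (Real.exp a * y) = (a : EReal) + elog y := by
  unfold elog
  by_cases hy : y ≤ 0
  · rw [if_pos hy, if_pos (mul_nonpos_iff.2 (Or.inl ⟨(Real.exp_pos a).le, hy⟩)), EReal.add_bot]
  · have hy' : 0 < y := lt_of_not_ge hy
    have hpos : 0 < Real.exp a * y := mul_pos (Real.exp_pos a) hy'
    rw [if_neg hy, if_neg (not_le.2 hpos),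
      Real.log_mul (Real.exp_ne_zero a) (ne_of_gt hy'), Real.log_exp, EReal.coe_add]

lemma coe_mul_coe_add (r s : ℝ) (hr : 0 < r) (a : EReal) :
    (r : EReal) * ((s : EReal) + a) = ((r * s : ℝ) : EReal) + (r : EReal) * a := by
  have hr' : (0 : EReal) < (r : EReal) := by exact_mod_cast hr
  induction a using EReal.rec with
  | bot => rw [EReal.add_bot, EReal.mul_bot_of_pos hr', EReal.add_bot]
  | coe b =>
      rw [← EReal.coe_add, ← EReal.coe_mul, ← EReal.coe_mul, ← EReal.coe_add]
      norm_num [mul_add]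
  | top => rw [EReal.coe_add_top, EReal.mul_top_of_pos hr', EReal.coe_add_top]

lemma le_const_add_of_forall_eps {x y : EReal} {c : ℝ}
    (h : ∀ ε : ℝ, 0 < ε → x ≤ ((c + ε : ℝ) : EReal) + y) : x ≤ (c : EReal) + y := by
  induction y using EReal.rec with
  | bot =>
      have := h 1 one_pos
      rw [EReal.add_bot] at this ⊢
      exact this
  | coe b =>
      rw [← EReal.coe_add, ← EReal.le_of_forall_lt_iff_le]
      intro z hz
      have hz' : (c + b : ℝ) < z := by exact_mod_cast hz
      have hε : 0 < z - (c + b) := by linarith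
      have := h (z - (c + b)) hε
      rw [← EReal.coe_add] at this
      calc x ≤ ((c + (z - (c + b)) + b : ℝ) : EReal) := this
      _ = ((z : ℝ) : EReal) := by rw [show c + (z - (c + b)) + b = z by ring]
  | top =>
      rw [EReal.coe_add_top]
      exact le_top

lemma key_le {ι : Type*} (l : ι → ℝ) (w : ι → ℝ) (c : ℝ)
    (hfin : ∀ T : ℝ, {i | l i ≤ T}.Finite) (hw : ∀ i, 0 ≤ w i) :
    limsup (fun T : ℝ =>
        ((1 / T : ℝ) : EReal) *
          elog (∑ i ∈ (windowFinite l hfin T).toFinset, Real.exp (c * l i) * w i)) atTop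
      ≤ (c : EReal) + limsup (fun T : ℝ =>
          ((1 / T : ℝ) : EReal) *
            elog (∑ i ∈ (windowFinite l hfin T).toFinset, w i)) atTop := by
  set G := fun T : ℝ => ((1 / T : ℝ) : EReal) *
      elog (∑ i ∈ (windowFinite l hfin T).toFinset, Real.exp (c * l i) * w i) with hG
  set F := fun T : ℝ => ((1 / T : ℝ) : EReal) *
      elog (∑ i ∈ (windowFinite l hfin T).toFinset, w i) with hF
  -- main ε-estimate
  have main : ∀ ε : ℝ, 0 < ε → limsup G atTop ≤ ((c + ε : ℝ) : EReal) + limsup F atTop := by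
    intro ε hε
    have hpt : ∀ T : ℝ, 1 ≤ T → |c| / ε ≤ T → G T ≤ ((c + ε : ℝ) : EReal) + F T := by
      intro T hT1 hTc
      have hT0 : 0 < T := lt_of_lt_of_le one_pos hT1
      -- sum comparison
      have hsum : (∑ i ∈ (windowFinite l hfin T).toFinset, Real.exp (c * l i) * w i)
          ≤ Real.exp (c * T + |c|) * (∑ i ∈ (windowFinite l hfin T).toFinset, w i) := by
        rw [Finset.mul_sum]
        refine Finset.sum_le_sum fun i hi => ?_
        have hi' : T < l i ∧ l i ≤ T + 1 := by
          simpa using (Set.Finite.mem_toFinset _).1 hi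
        have hcl : c * l i ≤ c * T + |c| := by
          rcases le_or_gt 0 c with hc | hc
          · have := mul_le_mul_of_nonneg_left hi'.2 hc
            rw [abs_of_nonneg hc]; nlinarith
          · have := mul_le_mul_of_nonpos_left hi'.1.le hc.le
            rw [abs_of_neg hc]; nlinarith
        exact mul_le_mul_of_nonneg_right (Real.exp_le_exp.2 hcl) (hw i)
      have h1 : elog (∑ i ∈ (windowFinite l hfin T).toFinset, Real.exp (c * l i) * w i)
          ≤ ((c * T + |c| : ℝ) : EReal) +
            elog (∑ i ∈ (windowFinite l hfin T).toFinset, w i) := by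
        calc _ ≤ elog (Real.exp (c * T + |c|) *
              (∑ i ∈ (windowFinite l hfin T).toFinset, w i)) := elog_mono hsum
        _ = _ := elog_exp_mul _ _
      have h2 : G T ≤ ((1 / T : ℝ) : EReal) * (((c * T + |c| : ℝ) : EReal) +
          elog (∑ i ∈ (windowFinite l hfin T).toFinset, w i)) := by
        refine mul_le_mul_of_nonneg_left h1 ?_
        exact_mod_cast (by positivity : (0:ℝ) ≤ 1 / T)
      rw [coe_mul_coe_add _ _ (by positivity) _] at h2
      refine h2.trans (add_le_add_left ?_ _)
      have : (1 / T) * (c * T + |c|) ≤ c + ε := by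
        have h3 : |c| ≤ ε * T := by
          calc |c| = (|c| / ε) * ε := by field_simp
          _ ≤ T * ε := mul_le_mul_of_nonneg_right hTc hε.le
          _ = ε * T := mul_comm _ _
        rw [div_mul_eq_mul_div, div_le_iff₀ hT0]
        nlinarith
      exact_mod_cast this
    have hev : ∀ᶠ T : ℝ in atTop, G T ≤ ((c + ε : ℝ) : EReal) + F T := by
      filter_upwards [eventually_ge_atTop (1 : ℝ), eventually_ge_atTop (|c| / ε)] with T h1 h2
        using hpt T h1 h2
    calc limsup G atTop ≤ limsup (fun T => ((c + ε : ℝ) : EReal) + F T) atTop :=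
        limsup_le_limsup hev
    _ ≤ ((c + ε : ℝ) : EReal) + limsup F atTop := by
        have h := EReal.limsup_add_le (f := atTop)
          (u := fun _ : ℝ => ((c + ε : ℝ) : EReal)) (v := F) ?_ ?_
        · simpa [limsup_const, Pi.add_def] using h
        · exact Or.inl (by simp [← EReal.coe_add])
        · exact Or.inl (by simp [← EReal.coe_add])
  exact le_const_add_of_forall_eps main

/-- Tilting the weights by the exponential factor `e^{c·λ i}` shifts the exponential
growth rate of the window sums `∑_{T < λ i ≤ T+1} w i` by exactly `c` (in the extended
reals, where `c + (±∞) = ±∞`). -/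
theorem exponential_tilting_shifts_growth_rate {ι : Type*} [Countable ι]
    (l : ι → ℝ) (w : ι → ℝ) (c : ℝ)
    (hl : ∀ i, 0 ≤ l i) (hfin : ∀ T : ℝ, {i | l i ≤ T}.Finite)
    (hw : ∀ i, 0 ≤ w i) :
    limsup (fun T : ℝ =>
        ((1 / T : ℝ) : EReal) *
          elog (∑ i ∈ (windowFinite l hfin T).toFinset, Real.exp (c * l i) * w i)) atTop
      = (c : EReal) + limsup (fun T : ℝ =>
          ((1 / T : ℝ) : EReal) *
            elog (∑ i ∈ (windowFinite l hfin T).toFinset, w i)) atTop := by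
  have h1 := key_le l w c hfin hw
  have hw' : ∀ i, 0 ≤ Real.exp (c * l i) * w i :=
    fun i => mul_nonneg (Real.exp_pos _).le (hw i)
  have h2 := key_le l (fun i => Real.exp (c * l i) * w i) (-c) hfin hw'
  have hsum : ∀ T : ℝ, (∑ i ∈ (windowFinite l hfin T).toFinset,
      Real.exp (-c * l i) * (Real.exp (c * l i) * w i))
      = ∑ i ∈ (windowFinite l hfin T).toFinset, w i := by
    intro T
    refine Finset.sum_congr rfl fun i _ => ?_
    rw [← mul_assoc, ← Real.exp_add, neg_mul, neg_add_cancel, Real.exp_zero, one_mul]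
  simp only [hsum] at h2
  refine le_antisymm h1 ?_
  have h3 : ((c : ℝ) : EReal) + limsup (fun T : ℝ =>
        ((1 / T : ℝ) : EReal) *
          elog (∑ i ∈ (windowFinite l hfin T).toFinset, w i)) atTop
      ≤ ((c : ℝ) : EReal) + (((-c : ℝ) : EReal) + limsup (fun T : ℝ =>
        ((1 / T : ℝ) : EReal) *
          elog (∑ i ∈ (windowFinite l hfin T).toFinset,
            Real.exp (c * l i) * w i)) atTop) := add_le_add_right h2 _
  refine h3.trans ?_
  rw [← add_assoc, ← EReal.coe_add]
  norm_num
end
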